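/- (Description of the orbit polytope of a tuple of matrices.) Let X_1, …, X_n be real matrices with X_i ∈ ℝ^{d×d_i} and let c = (c_1,…,c_n) ∈ ℝ^n_{≥0} with ∑_{i=1}^n c_i = d. Then the following are equivalent: (a) for every linear subspace T ⊆ ℝ^d and every subset J ⊆ {1,…,n} such that Col(X_i) ⊆ T^⊥ for all i ∉ J, one has dim T ≤ ∑_{i∈J} c_i; (b) for every subset I ⊆ {1,…,n}, ∑_{i∈I} c_i ≤ dim(∑_{i∈I} Col(X_i)). (Condition (a) is membership of c in the orbit polytope K_{V_F} of the quiver representation V_F attached to the tuple, and (b) is membership in K_F; the lemma asserts K_{V_F} = K_F.) -/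

import Mathlib

open scoped BigOperators
open Matrix

namespace MFrames

/-- The squared Frobenius norm of a real matrix. -/
noncomputable def frobSq {α β : Type*} [Fintype α] [Fintype β] (X : Matrix α β ℝ) : ℝ :=
  ∑ i, ∑ j, X i j ^ 2

variable {d n : ℕ} {m : Fin n → ℕ}

/-- Squared distance between two tuples of matrices. -/
noncomputable def dist2 (F G : ∀ i : Fin n, Matrix (Fin d) (Fin (m i)) ℝ) : ℝ :=
  ∑ i, frobSq (F i - G i)

/-- The frame operator `∑ Xᵢ Xᵢᵀ`. -/
noncomputable def frameOp (F : ∀ i : Fin n, Matrix (Fin d) (Fin (m i)) ℝ) :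
    Matrix (Fin d) (Fin d) ℝ :=
  ∑ i, F i * (F i)ᵀ

/-- `F` is a matrix frame: `∑ Xᵢ Xᵢᵀ` is positive definite. -/
def IsMatrixFrame (F : ∀ i : Fin n, Matrix (Fin d) (Fin (m i)) ℝ) : Prop :=
  (frameOp F).PosDef

/-- `F` is an ε-nearly equal-norm Parseval matrix frame. -/
def NearlyENParseval (ε : ℝ) (F : ∀ i : Fin n, Matrix (Fin d) (Fin (m i)) ℝ) : Prop :=
  (frameOp F - (1 - ε) • (1 : Matrix (Fin d) (Fin d) ℝ)).PosSemidef ∧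
  ((1 + ε) • (1 : Matrix (Fin d) (Fin d) ℝ) - frameOp F).PosSemidef ∧
  ∀ i, (1 - ε) * ((d : ℝ) / n) ≤ frobSq (F i) ∧ frobSq (F i) ≤ (1 + ε) * ((d : ℝ) / n)

/-- `F` is an equal-norm Parseval matrix frame. -/
def EqualNormParseval (F : ∀ i : Fin n, Matrix (Fin d) (Fin (m i)) ℝ) : Prop :=
  frameOp F = 1 ∧ ∀ i, frobSq (F i) = (d : ℝ) / n

/-- The columns of the concatenated matrix `[X₁ | … | Xₙ]`. -/
def col (F : ∀ i : Fin n, Matrix (Fin d) (Fin (m i)) ℝ) (p : (i : Fin n) × Fin (m i)) :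
    Fin d → ℝ :=
  fun r => F p.1 r p.2

/-- `F` is generic: `n > d` and any `d` of the columns of `[X₁ | … | Xₙ]` are linearly
independent (hence a basis of `ℝ^d`). -/
def Generic (F : ∀ i : Fin n, Matrix (Fin d) (Fin (m i)) ℝ) : Prop :=
  d < n ∧ ∀ S : Finset ((i : Fin n) × Fin (m i)), S.card = d →
    LinearIndependent ℝ (fun p : S => col F (p : (i : Fin n) × Fin (m i)))

/-- Column span of a matrix. -/
def colSpan {k : ℕ} (X : Matrix (Fin d) (Fin k) ℝ) : Submodule ℝ (Fin d → ℝ) :=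
  Submodule.span ℝ (Set.range Xᵀ)

/-- The orbit polytope `K_F` of a tuple of matrices. -/
def orbitPolytope (F : ∀ i : Fin n, Matrix (Fin d) (Fin (m i)) ℝ) : Set (Fin n → ℝ) :=
  {c | (∀ i, 0 ≤ c i) ∧ (∑ i, c i = d) ∧
    ∀ I : Finset (Fin n),
      ∑ i ∈ I, c i ≤ (Module.finrank ℝ ↥(⨆ i ∈ I, colSpan (F i)) : ℝ)}

/-- `Φ_F(t) = log det (∑ e^{tᵢ} Xᵢ Xᵢᵀ)`. -/
noncomputable def Phi (F : ∀ i : Fin n, Matrix (Fin d) (Fin (m i)) ℝ) (t : Fin n → ℝ) : ℝ :=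
  Real.log (∑ i, Real.exp (t i) • (F i * (F i)ᵀ)).det

/-- The objective function `Φ_F(t) - ⟨t, c⟩` whose infimum over `t` is `f_F(c)`. -/
noncomputable def obj (F : ∀ i : Fin n, Matrix (Fin d) (Fin (m i)) ℝ)
    (c : Fin n → ℝ) (t : Fin n → ℝ) : ℝ :=
  Phi F t - ∑ i, t i * c i

/-- `Δ_S` for `S ∈ 𝒜`, where `S` is encoded as a function `σ` assigning to each `i` a subset
`σ i ⊆ {1,…,dᵢ}` of the columns of `Xᵢ` (with `i ∈ S` iff `σ i ≠ ∅`). -/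
noncomputable def Delta (F : ∀ i : Fin n, Matrix (Fin d) (Fin (m i)) ℝ)
    (σ : ∀ i : Fin n, Finset (Fin (m i))) : ℝ :=
  (∑ i, ∑ k ∈ σ i, Matrix.of (fun r s : Fin d => F i r k * F i s k)).det

/-- The index set `𝒜`: collections of subsets of columns with `d` columns in total. -/
def indexA (d : ℕ) (m : Fin n → ℕ) : Finset (∀ i : Fin n, Finset (Fin (m i))) :=
  Finset.univ.filter fun σ => (∑ i, (σ i).card) = d

/-- Membership in the semialgebraic set `𝕍(F, c)`.  (Summing `(σ i).card • ⋯` over all of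
`𝒜` is the same as summing `|Sᵢ| • ⋯` over those `S ∈ 𝒜` with `i ∈ S`.) -/
noncomputable def inVariety (F : ∀ i : Fin n, Matrix (Fin d) (Fin (m i)) ℝ)
    (c ξ : Fin n → ℝ) : Prop :=
  (∀ i, 0 < ξ i) ∧ ∀ i,
    (∑ σ ∈ indexA d m, ((σ i).card : ℝ) * (∏ l, ξ l ^ (σ l).card) * Delta F σ)
      = c i * ∑ σ ∈ indexA d m, (∏ l, ξ l ^ (σ l).card) * Delta F σ

/-- `A` transforms `(F, c)` into a radial isotropic frame. -/
noncomputable def TransformsToRIF (F : ∀ i : Fin n, Matrix (Fin d) (Fin (m i)) ℝ)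
    (c : Fin n → ℝ) (A : Matrix (Fin d) (Fin d) ℝ) : Prop :=
  ∑ i, (c i / frobSq (A * F i)) • ((A * F i) * (A * F i)ᵀ) = 1

/-- Columns of `X` all orthogonal to the subspace `T`, i.e. `Col(X) ⊆ T^⊥`. -/
def colsPerp {k : ℕ} (X : Matrix (Fin d) (Fin k) ℝ) (T : Submodule ℝ (Fin d → ℝ)) : Prop :=
  ∀ x ∈ T, Xᵀ.mulVec x = 0

end MFrames

namespace MFrames


noncomputable def toE {d : ℕ} : (Fin d → ℝ) ≃ₗ[ℝ] EuclideanSpace ℝ (Fin d) :=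
  (WithLp.linearEquiv 2 ℝ (Fin d → ℝ)).symm

lemma inner_toE {d : ℕ} (v x : Fin d → ℝ) :
    (inner ℝ (toE v) (toE x) : ℝ) = ∑ r, v r * x r := by
  simp [toE, PiLp.inner_apply, RCLike.inner_apply, mul_comm]

lemma colsPerp_iff {d k : ℕ} (X : Matrix (Fin d) (Fin k) ℝ) (T : Submodule ℝ (Fin d → ℝ)) :
    colsPerp X T ↔ (colSpan X).map (toE : (Fin d → ℝ) ≃ₗ[ℝ] _).toLinearMap ≤ ((T.map (toE : (Fin d → ℝ) ≃ₗ[ℝ] _).toLinearMap)ᗮ) := by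
  constructor
  · intro h
    rw [Submodule.map_le_iff_le_comap]
    rw [colSpan, Submodule.span_le]
    rintro v ⟨j, rfl⟩
    simp only [SetLike.mem_coe, Submodule.mem_comap, LinearEquiv.coe_coe,
      Submodule.mem_orthogonal]
    rintro u ⟨x, hx, rfl⟩
    have h0 := congrFun (h x hx) j
    rw [LinearEquiv.coe_coe, inner_toE]
    simpa [Matrix.mulVec, dotProduct, mul_comm] using h0
  · intro h x hx
    funext j
    have hv : (toE (Xᵀ j)) ∈ (colSpan X).map (toE : (Fin d → ℝ) ≃ₗ[ℝ] _).toLinearMap :=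
      ⟨Xᵀ j, Submodule.subset_span ⟨j, rfl⟩, rfl⟩
    have := (h hv) (toE x) ⟨x, hx, rfl⟩
    rw [inner_toE] at this
    simpa [Matrix.mulVec, dotProduct, mul_comm] using this

/-- **Description of the orbit polytope of a tuple of matrices (`K_{V_F} = K_F`).**
For `c ≥ 0` with `∑ cᵢ = d`, condition (a): `dim T ≤ ∑_{i∈J} cᵢ` for every pair `(T, J)`
with `Col(Xᵢ) ⊆ T^⊥` for all `i ∉ J` (a subrepresentation of `V_F`), is equivalent to
condition (b): `∑_{i∈I} cᵢ ≤ dim (∑_{i∈I} Col(Xᵢ))` for every `I ⊆ [n]`. -/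
theorem orbit_polytope_description {d n : ℕ} {m : Fin n → ℕ}
    (F : ∀ i : Fin n, Matrix (Fin d) (Fin (m i)) ℝ)
    (c : Fin n → ℝ) (hc0 : ∀ i, 0 ≤ c i) (hcsum : ∑ i, c i = d) :
    (∀ T : Submodule ℝ (Fin d → ℝ), ∀ J : Finset (Fin n),
        (∀ i ∉ J, colsPerp (F i) T) → (Module.finrank ℝ T : ℝ) ≤ ∑ i ∈ J, c i) ↔
      (∀ I : Finset (Fin n),
        ∑ i ∈ I, c i ≤ (Module.finrank ℝ ↥(⨆ i ∈ I, colSpan (F i)) : ℝ)) := by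
  have hrk : ∀ p : Submodule ℝ (Fin d → ℝ),
      Module.finrank ℝ (p.map (toE : (Fin d → ℝ) ≃ₗ[ℝ] _).toLinearMap) = Module.finrank ℝ p :=
    fun p => LinearEquiv.finrank_map_eq _ p
  have hmapU : ∀ I : Finset (Fin n),
      (⨆ i ∈ I, colSpan (F i)).map (toE : (Fin d → ℝ) ≃ₗ[ℝ] _).toLinearMap
        = ⨆ i ∈ I, (colSpan (F i)).map (toE : (Fin d → ℝ) ≃ₗ[ℝ] _).toLinearMap := by
    intro I
    simp [Submodule.map_iSup]
  constructor
  · -- (a) → (b)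
    intro ha I
    set U := ⨆ i ∈ I, colSpan (F i) with hUdef
    set U' := U.map (toE : (Fin d → ℝ) ≃ₗ[ℝ] _).toLinearMap with hU'def
    set T : Submodule ℝ (Fin d → ℝ) := U'ᗮ.comap (toE : (Fin d → ℝ) ≃ₗ[ℝ] _).toLinearMap with hTdef
    have hTmap : T.map (toE : (Fin d → ℝ) ≃ₗ[ℝ] _).toLinearMap = U'ᗮ := by
      rw [hTdef, Submodule.map_comap_eq_of_surjective (LinearEquiv.surjective _)]
    have hperp : ∀ i ∉ Iᶜ, colsPerp (F i) T := by
      intro i hi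
      rw [colsPerp_iff, hTmap, Submodule.orthogonal_orthogonal]
      calc (colSpan (F i)).map (toE : (Fin d → ℝ) ≃ₗ[ℝ] _).toLinearMap
          ≤ ⨆ j ∈ I, (colSpan (F j)).map (toE : (Fin d → ℝ) ≃ₗ[ℝ] _).toLinearMap :=
            le_iSup₂ (f := fun j (_ : j ∈ I) => (colSpan (F j)).map
              (toE : (Fin d → ℝ) ≃ₗ[ℝ] _).toLinearMap) i (by simpa using hi)
        _ = U' := by rw [hU'def, hmapU]
    have hb := ha T Iᶜ hperp
    have hrkT : Module.finrank ℝ T + Module.finrank ℝ U = d := by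
      have h1 := Submodule.finrank_add_finrank_orthogonal U'
      rw [finrank_euclideanSpace_fin] at h1
      have h2 : Module.finrank ℝ T = Module.finrank ℝ U'ᗮ := by rw [← hrk T, hTmap]
      have h3 : Module.finrank ℝ U' = Module.finrank ℝ U := hrk U
      omega
    have hsum : ∑ i ∈ Iᶜ, c i + ∑ i ∈ I, c i = (d : ℝ) := by
      rw [Finset.sum_compl_add_sum]; exact hcsum
    have : (Module.finrank ℝ T : ℝ) + (Module.finrank ℝ U : ℝ) = (d : ℝ) := by
      exact_mod_cast congrArg (Nat.cast : ℕ → ℝ) hrkT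
    linarith
  · -- (b) → (a)
    intro hb T J hTJ
    set I := Jᶜ with hIdef
    set U := ⨆ i ∈ I, colSpan (F i) with hUdef
    have hle : U.map (toE : (Fin d → ℝ) ≃ₗ[ℝ] _).toLinearMap ≤ (T.map (toE : (Fin d → ℝ) ≃ₗ[ℝ] _).toLinearMap)ᗮ := by
      rw [hUdef, hmapU]
      apply iSup₂_le
      intro i hi
      exact (colsPerp_iff (F i) T).mp (hTJ i (by simpa [hIdef] using hi))
    have hrkU : Module.finrank ℝ U + Module.finrank ℝ T ≤ d := by
      have h1 := Submodule.finrank_add_finrank_orthogonal (T.map (toE : (Fin d → ℝ) ≃ₗ[ℝ] _).toLinearMap)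
      rw [finrank_euclideanSpace_fin] at h1
      have h2 : Module.finrank ℝ (U.map (toE : (Fin d → ℝ) ≃ₗ[ℝ] _).toLinearMap)
          ≤ Module.finrank ℝ (T.map (toE : (Fin d → ℝ) ≃ₗ[ℝ] _).toLinearMap)ᗮ :=
        Submodule.finrank_mono hle
      rw [hrk] at h2
      rw [hrk T] at h1
      omega
    have hbI := hb I
    have hsum : ∑ i ∈ I, c i + ∑ i ∈ J, c i = (d : ℝ) := by
      rw [hIdef, Finset.sum_compl_add_sum]; exact hcsum
    have : (Module.finrank ℝ U : ℝ) + (Module.finrank ℝ T : ℝ) ≤ (d : ℝ) := by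
      exact_mod_cast hrkU
    linarith


end MFrames
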